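/- Let G be a group acting on a set X, let s₁, s₂ ∈ G, set s₀ := s₁ * s₂, and assume s₀² = 1, s₀ ≠ 1, s₁ ≠ 1, s₂ ≠ 1 and that the cyclic subgroups ⟨s₀⟩, ⟨s₁⟩, ⟨s₂⟩ intersect pairwise trivially. Let v ∈ X have trivial stabilizer, set e₀ := {v, s₀ • v}, e₁ := {v, s₁ • v}, e₂ := {v, s₂ • v}, and F₂⁰ := {e₀, e₁, s₁ • e₂} (a set of three subsets of X). Then the stabilizer of F₂⁰ in G (under the induced action on sets of subsets) is trivial; in particular s₀ • F₂⁰ ≠ F₂⁰. -/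

import Mathlib

open Pointwise

/-- The base edges of the snub: `e₀ = {v, (s₁s₂)•v}`, `e₁ = {v, s₁•v}`, `e₂ = {v, s₂•v}`. -/
def snubBaseEdge {G X : Type*} [Group G] [MulAction G X] (s₁ s₂ : G) (v : X) :
    Fin 3 → Set X :=
  ![{v, (s₁ * s₂) • v}, {v, s₁ • v}, {v, s₂ • v}]

/-- The type-0 base face `F₂⁰ = {e₀, e₁, s₁ • e₂}` of the snub. -/
def snubBaseFaceZero {G X : Type*} [Group G] [MulAction G X] (s₁ s₂ : G) (v : X) :
    Set (Set X) :=
  {snubBaseEdge s₁ s₂ v 0, snubBaseEdge s₁ s₂ v 1, s₁ • snubBaseEdge s₁ s₂ v 2}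

/-- With `s₀ := s₁s₂` an involution, `s₀, s₁, s₂` nontrivial, the cyclic subgroups they
generate intersecting pairwise trivially, and `v` a point with trivial stabilizer, the
stabilizer of the type-0 base face `F₂⁰ = {e₀, e₁, s₁ • e₂}` is trivial; in particular
`s₀ • F₂⁰ ≠ F₂⁰`. -/
theorem snub_base_face_zero_stabilizer_trivial {G X : Type*} [Group G] [MulAction G X]
    (s₁ s₂ : G) (h0 : (s₁ * s₂) ^ 2 = 1)
    (hs0 : s₁ * s₂ ≠ 1) (hs1 : s₁ ≠ 1) (hs2 : s₂ ≠ 1)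
    (h01 : Subgroup.zpowers (s₁ * s₂) ⊓ Subgroup.zpowers s₁ = ⊥)
    (h02 : Subgroup.zpowers (s₁ * s₂) ⊓ Subgroup.zpowers s₂ = ⊥)
    (h12 : Subgroup.zpowers s₁ ⊓ Subgroup.zpowers s₂ = ⊥)
    (v : X) (hv : ∀ g : G, g • v = v → g = 1) :
    MulAction.stabilizer G (snubBaseFaceZero s₁ s₂ v) = ⊥ ∧
    (s₁ * s₂) • snubBaseFaceZero s₁ s₂ v ≠ snubBaseFaceZero s₁ s₂ v := by
  set s₀ := s₁ * s₂ with hs₀def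
  -- freeness on the orbit of v
  have hfree : ∀ g h : G, g • v = h • v → g = h := by
    intro g h hgh
    have h1 : (h⁻¹ * g) • v = v := by
      rw [mul_smul, hgh, ← mul_smul, inv_mul_cancel, one_smul]
    exact (inv_mul_eq_one.mp (hv _ h1)).symm
  have hsq : s₀ * s₀ = 1 := by rw [← pow_two]; exact h0
  have hinv : s₀⁻¹ = s₀ := inv_eq_of_mul_eq_one_right hsq
  -- s₀ ≠ s₁
  have hne01 : s₀ ≠ s₁ := by
    intro h
    apply hs0
    have : s₀ ∈ Subgroup.zpowers s₀ ⊓ Subgroup.zpowers s₁ :=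
      ⟨Subgroup.mem_zpowers s₀, h ▸ Subgroup.mem_zpowers s₁⟩
    rw [h01] at this
    exact Subgroup.mem_bot.mp this
  -- s₀ ≠ s₁⁻¹
  have hne01' : s₁ * s₀ ≠ 1 := by
    intro h
    apply hs0
    have hinv' : s₀ = s₁⁻¹ := eq_inv_of_mul_eq_one_right h
    have : s₀ ∈ Subgroup.zpowers s₀ ⊓ Subgroup.zpowers s₁ :=
      ⟨Subgroup.mem_zpowers s₀, hinv' ▸ Subgroup.inv_mem _ (Subgroup.mem_zpowers s₁)⟩
    rw [h01] at this
    exact Subgroup.mem_bot.mp this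
  -- the three edges
  have hE2 : s₁ • snubBaseEdge s₁ s₂ v 2 = {s₁ • v, s₀ • v} := by
    show s₁ • ({v, s₂ • v} : Set X) = _
    rw [Set.smul_set_insert, Set.smul_set_singleton, ← mul_smul]
  -- the vertex set of the triangle
  set T : Set X := {v, s₀ • v, s₁ • v} with hT
  have hsubF : ∀ A ∈ snubBaseFaceZero s₁ s₂ v, A ⊆ T := by
    intro A hA
    rcases hA with rfl | rfl | rfl
    · intro x hx
      rcases hx with rfl | rfl
      · exact Or.inl rfl
      · exact Or.inr (Or.inl rfl)
    · intro x hx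
      rcases hx with rfl | rfl
      · exact Or.inl rfl
      · exact Or.inr (Or.inr rfl)
    · rw [hE2]
      intro x hx
      rcases hx with rfl | rfl
      · exact Or.inr (Or.inr rfl)
      · exact Or.inr (Or.inl rfl)
  have hstab : MulAction.stabilizer G (snubBaseFaceZero s₁ s₂ v) = ⊥ := by
    rw [eq_bot_iff]
    intro g hg
    rw [MulAction.mem_stabilizer_iff] at hg
    rw [Subgroup.mem_bot]
    have key : ∀ (u : X) (A : Set X), A ∈ snubBaseFaceZero s₁ s₂ v → u ∈ A → g • u ∈ T := by
      intro u A hA hu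
      have hgA : g • A ∈ snubBaseFaceZero s₁ s₂ v := by
        rw [← hg]; exact Set.smul_mem_smul_set hA
      exact hsubF _ hgA (Set.smul_mem_smul_set hu)
    have he0 : snubBaseEdge s₁ s₂ v 0 ∈ snubBaseFaceZero s₁ s₂ v := Or.inl rfl
    have he1 : snubBaseEdge s₁ s₂ v 1 ∈ snubBaseFaceZero s₁ s₂ v := Or.inr (Or.inl rfl)
    have hgv : g • v ∈ T := key v _ he0 (Or.inl rfl)
    have hgs0 : g • (s₀ • v) ∈ T := key (s₀ • v) _ he0 (Or.inr rfl)
    have hgs1 : g • (s₁ • v) ∈ T := key (s₁ • v) _ he1 (Or.inr rfl)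
    rcases hgv with h | h | h
    · exact hv g h
    · -- g = s₀
      have hg0 : g = s₀ := hfree _ _ h
      exfalso
      rw [hg0, ← mul_smul] at hgs1
      rcases hgs1 with h' | h' | h'
      · -- s₀ s₁ = 1, i.e. s₁ = s₀⁻¹ = s₀
        have : s₀ * s₁ = 1 := hv _ h'
        exact hne01 (((eq_inv_of_mul_eq_one_right this).trans hinv).symm)
      · have : s₀ * s₁ = s₀ := hfree _ _ h'
        exact hs1 (by rwa [mul_eq_left] at this)
      · have : s₀ * s₁ = s₁ := hfree _ _ h'
        exact hs0 (by rwa [mul_eq_right] at this)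
    · -- g = s₁
      have hg1 : g = s₁ := hfree _ _ h
      exfalso
      rw [hg1, ← mul_smul] at hgs0
      rcases hgs0 with h' | h' | h'
      · exact hne01' (hv _ h')
      · have : s₁ * s₀ = s₀ := hfree _ _ h'
        exact hs1 (by rwa [mul_eq_right] at this)
      · have : s₁ * s₀ = s₁ := hfree _ _ h'
        exact hs0 (by rwa [mul_eq_left] at this)
  refine ⟨hstab, ?_⟩
  intro hcon
  have : s₀ ∈ MulAction.stabilizer G (snubBaseFaceZero s₁ s₂ v) :=
    MulAction.mem_stabilizer_iff.mpr hcon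
  rw [hstab, Subgroup.mem_bot] at this
  exact hs0 this
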